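/- Define G_full : ℝ⁴ → ℝ by G_full(x₁, x₂, p, q) = 45·(1−x₁) + 5·x₁ + 50·x₂ + (95·x₁ − 45·(1−x₁) + 50·x₂)·p + (20·(1−x₁) − 5·x₁ + 200·(1−x₂) − 50·x₂)·q − (5·x₁ + 50·x₂)·p·q − (10·(1−x₁) + 100·(1−x₂))·q². Then the supremum over (x₁, x₂) ∈ [0,1] × [0,1] of the infimum, over all finitely supported probability distributions μ on [1/10, 9/10] × [1/10, 9/10], of E_μ[(p,q) ↦ G_full(x₁, x₂, p, q)] equals 28871/390 (i.e., 74 + 11/390). -/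

import Mathlib

/-- A finitely supported probability distribution on a set `S`:
a finitely supported nonnegative function with support inside `S` summing to `1`. -/
def IsFinProbDist {α : Type*} (S : Set α) (μ : α →₀ ℝ) : Prop :=
  (∀ u, 0 ≤ μ u) ∧ ↑μ.support ⊆ S ∧ (∑ u ∈ μ.support, μ u) = 1

/-- Expectation of `g` under a finitely supported distribution `μ`. -/
noncomputable def expect {α : Type*} (μ : α →₀ ℝ) (g : α → ℝ) : ℝ :=
  ∑ u ∈ μ.support, μ u * g u

noncomputable def GFull (x₁ x₂ p q : ℝ) : ℝ :=
  45 * (1 - x₁) + 5 * x₁ + 50 * x₂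
    + (95 * x₁ - 45 * (1 - x₁) + 50 * x₂) * p
    + (20 * (1 - x₁) - 5 * x₁ + 200 * (1 - x₂) - 50 * x₂) * q
    - (5 * x₁ + 50 * x₂) * (p * q)
    - (10 * (1 - x₁) + 100 * (1 - x₂)) * q ^ 2

lemma expect_ge {α : Type*} {S : Set α} {μ : α →₀ ℝ} {g : α → ℝ} {m : ℝ}
    (h : IsFinProbDist S μ) (hg : ∀ u ∈ S, m ≤ g u) : m ≤ expect μ g := by
  obtain ⟨h0, hsupp, hsum⟩ := h
  calc m = ∑ u ∈ μ.support, μ u * m := by rw [← Finset.sum_mul, hsum, one_mul]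
    _ ≤ ∑ u ∈ μ.support, μ u * g u := by
        apply Finset.sum_le_sum
        intro u hu
        exact mul_le_mul_of_nonneg_left (hg u (hsupp hu)) (h0 u)
    _ = expect μ g := rfl

lemma expect_single {α : Type*} (u : α) (g : α → ℝ) :
    expect (Finsupp.single u 1) g = g u := by
  unfold expect
  rw [Finsupp.support_single_ne_zero u one_ne_zero]
  simp

lemma single_dist {α : Type*} {S : Set α} {u : α} (hu : u ∈ S) :
    IsFinProbDist S (Finsupp.single u (1 : ℝ)) := by
  refine ⟨fun v => ?_, ?_, ?_⟩
  · rcases eq_or_ne v u with rfl | h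
    · simp
    · rw [Finsupp.single_eq_of_ne' h.symm]
  · rw [Finsupp.support_single_ne_zero u one_ne_zero]
    simpa using hu
  · rw [Finsupp.support_single_ne_zero u one_ne_zero]
    simp

theorem fullStickiness_mixed_optimal_value :
    sSup {v : ℝ | ∃ x₁ ∈ Set.Icc (0 : ℝ) 1, ∃ x₂ ∈ Set.Icc (0 : ℝ) 1,
        v = sInf {w : ℝ | ∃ μ : (ℝ × ℝ) →₀ ℝ,
          IsFinProbDist (Set.Icc (1/10 : ℝ) (9/10) ×ˢ Set.Icc (1/10 : ℝ) (9/10)) μ ∧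
          w = expect μ (fun u => GFull x₁ x₂ u.1 u.2)}} = 28871 / 390 := by
  set Box : Set (ℝ × ℝ) := Set.Icc (1/10 : ℝ) (9/10) ×ˢ Set.Icc (1/10 : ℝ) (9/10) with hBox
  -- the inner set, as a function of x₁ x₂
  set W : ℝ → ℝ → Set ℝ := fun x₁ x₂ => {w : ℝ | ∃ μ : (ℝ × ℝ) →₀ ℝ,
      IsFinProbDist Box μ ∧ w = expect μ (fun u => GFull x₁ x₂ u.1 u.2)} with hW
  -- membership of corners in the box
  have hmem : ∀ p q : ℝ, p ∈ Set.Icc (1/10 : ℝ) (9/10) → q ∈ Set.Icc (1/10 : ℝ) (9/10) →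
      ((p, q) : ℝ × ℝ) ∈ Box := by
    intro p q hp hq; exact Set.mk_mem_prod hp hq
  have h110 : (1/10 : ℝ) ∈ Set.Icc (1/10 : ℝ) (9/10) := by constructor <;> norm_num
  have h910 : (9/10 : ℝ) ∈ Set.Icc (1/10 : ℝ) (9/10) := by constructor <;> norm_num
  -- point-mass values belong to W
  have hpt : ∀ x₁ x₂ p q : ℝ, (p, q) ∈ Box → GFull x₁ x₂ p q ∈ W x₁ x₂ := by
    intro x₁ x₂ p q hpq
    exact ⟨Finsupp.single (p, q) 1, single_dist hpq,
      (expect_single (p, q) (fun u : ℝ × ℝ => GFull x₁ x₂ u.1 u.2)).symm⟩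
  -- crude lower bound for G on the box when x ∈ [0,1]²
  have hLB : ∀ x₁ x₂ : ℝ, x₁ ∈ Set.Icc (0:ℝ) 1 → x₂ ∈ Set.Icc (0:ℝ) 1 →
      ∀ u : ℝ × ℝ, u ∈ Box → (-1000 : ℝ) ≤ GFull x₁ x₂ u.1 u.2 := by
    intro x₁ x₂ hx₁ hx₂ u hu
    obtain ⟨⟨hp1, hp2⟩, hq1, hq2⟩ := hu
    obtain ⟨ha1, ha2⟩ := hx₁
    obtain ⟨hb1, hb2⟩ := hx₂
    have hp0 : (0:ℝ) ≤ u.1 := by linarith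
    have hq0 : (0:ℝ) ≤ u.2 := by linarith
    unfold GFull
    nlinarith [sq_nonneg u.2, mul_nonneg ha1 hq0, mul_nonneg hb1 hq0,
      mul_nonneg ha1 hp0, mul_nonneg hb1 hp0,
      mul_nonneg (mul_nonneg ha1 hp0) hq0, mul_nonneg (mul_nonneg hb1 hp0) hq0,
      mul_nonneg ha1 (sq_nonneg u.2), mul_nonneg hb1 (sq_nonneg u.2)]
  -- W x₁ x₂ is bounded below
  have hbdd : ∀ x₁ x₂ : ℝ, x₁ ∈ Set.Icc (0:ℝ) 1 → x₂ ∈ Set.Icc (0:ℝ) 1 →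
      BddBelow (W x₁ x₂) := by
    intro x₁ x₂ hx₁ hx₂
    refine ⟨-1000, fun w hw => ?_⟩
    obtain ⟨μ, hμ, rfl⟩ := hw
    exact expect_ge hμ (fun u hu => hLB x₁ x₂ hx₁ hx₂ u hu)
  -- convex combination identity: 221·G(.1,.1) + 9·G(.9,.1) + 82·G(.9,.9) = 312·c
  have hident : ∀ x₁ x₂ : ℝ,
      221 * GFull x₁ x₂ (1/10) (1/10) + 9 * GFull x₁ x₂ (9/10) (1/10)
        + 82 * GFull x₁ x₂ (9/10) (9/10) = 312 * (28871 / 390) := by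
    intro x₁ x₂; unfold GFull; ring
  -- every element of the outer set is ≤ c
  have hub : ∀ v ∈ {v : ℝ | ∃ x₁ ∈ Set.Icc (0 : ℝ) 1, ∃ x₂ ∈ Set.Icc (0 : ℝ) 1,
      v = sInf (W x₁ x₂)}, v ≤ 28871 / 390 := by
    rintro v ⟨x₁, hx₁, x₂, hx₂, rfl⟩
    have hcorner : GFull x₁ x₂ (1/10) (1/10) ≤ 28871 / 390 ∨
        GFull x₁ x₂ (9/10) (1/10) ≤ 28871 / 390 ∨
        GFull x₁ x₂ (9/10) (9/10) ≤ 28871 / 390 := by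
      by_contra hcon
      push_neg at hcon
      obtain ⟨h1, h2, h3⟩ := hcon
      have := hident x₁ x₂
      linarith
    have key : ∃ w ∈ W x₁ x₂, w ≤ 28871 / 390 := by
      rcases hcorner with h | h | h
      · exact ⟨_, hpt x₁ x₂ _ _ (hmem _ _ h110 h110), h⟩
      · exact ⟨_, hpt x₁ x₂ _ _ (hmem _ _ h910 h110), h⟩
      · exact ⟨_, hpt x₁ x₂ _ _ (hmem _ _ h910 h910), h⟩
    obtain ⟨w, hwW, hwle⟩ := key
    exact le_trans (csInf_le (hbdd x₁ x₂ hx₁ hx₂) hwW) hwle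
  apply le_antisymm
  · apply csSup_le
    · exact ⟨sInf (W 0 0), 0, ⟨le_refl 0, zero_le_one⟩, 0, ⟨le_refl 0, zero_le_one⟩, rfl⟩
    · exact hub
  · -- c is attained at x* = (17/117, 643/1170)
    have hx₁ : (17/117 : ℝ) ∈ Set.Icc (0:ℝ) 1 := by constructor <;> norm_num
    have hx₂ : (643/1170 : ℝ) ∈ Set.Icc (0:ℝ) 1 := by constructor <;> norm_num
    have hval : sInf (W (17/117) (643/1170)) = 28871 / 390 := by
      apply le_antisymm
      · have h0 : GFull (17/117) (643/1170) (1/10) (1/10) = 28871 / 390 := by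
          unfold GFull; norm_num
        have := csInf_le (hbdd _ _ hx₁ hx₂) (hpt (17/117) (643/1170) _ _ (hmem _ _ h110 h110))
        rwa [h0] at this
      · apply le_csInf
        · exact ⟨_, hpt (17/117) (643/1170) _ _ (hmem _ _ h110 h110)⟩
        · rintro w ⟨μ, hμ, rfl⟩
          apply expect_ge hμ
          rintro ⟨p, q⟩ ⟨⟨hp1, hp2⟩, hq1, hq2⟩
          show (28871/390 : ℝ) ≤ GFull (17/117) (643/1170) p q
          unfold GFull
          nlinarith [mul_nonneg (sub_nonneg.2 hq1) (sub_nonneg.2 hq2),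
            mul_nonneg (sub_nonneg.2 hp1) (sub_nonneg.2 hq1),
            mul_nonneg (sub_nonneg.2 hp1) (sub_nonneg.2 hq2),
            mul_nonneg (sub_nonneg.2 hp2) (sub_nonneg.2 hq1),
            mul_nonneg (sub_nonneg.2 hp2) (sub_nonneg.2 hq2)]
    apply le_csSup
    · exact ⟨28871 / 390, hub⟩
    · exact ⟨17/117, hx₁, 643/1170, hx₂, hval.symm⟩
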